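/- Every binary word x of length n is uniquely accepted (among words of length n) by some NFA with at most ⌊n/2⌋ + 1 states; i.e., the nondeterministic automatic complexity satisfies A_N(x) ≤ ⌊n/2⌋ + 1. -/

import Mathlib

/-- `p` is an accepting path of length `n` for the word `w` in the NFA `M`. -/
def IsAcceptingPath {σ : Type*} (M : NFA Bool σ) (n : ℕ)
    (w : Fin n → Bool) (p : Fin (n + 1) → σ) : Prop :=
  p 0 ∈ M.start ∧ p (Fin.last n) ∈ M.accept ∧
    ∀ i : Fin n, p i.succ ∈ M.step (p i.castSucc) (w i)

namespace Hyde

def pPath (n : ℕ) (i : Fin (n + 1)) : Fin (n / 2 + 1) :=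
  ⟨min i.val (2 * (n / 2) + 1 - i.val), by have := i.isLt; omega⟩

def hydeNFA (n : ℕ) (x : Fin n → Bool) : NFA Bool (Fin (n / 2 + 1)) where
  step q b := {q' | ∃ i : Fin n, x i = b ∧ pPath n i.castSucc = q ∧ pPath n i.succ = q'}
  start := {pPath n 0}
  accept := {pPath n (Fin.last n)}

lemma exists_path (n : ℕ) (x : Fin n → Bool) :
    IsAcceptingPath (hydeNFA n x) n x (pPath n) :=
  ⟨rfl, rfl, fun i => ⟨i, rfl, rfl, rfl⟩⟩

lemma nat_walk (n c : ℕ) (hc : c = 2 * (n / 2) + 1) (hn : 1 ≤ n) (R : ℕ → ℕ)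
    (hR0 : R 0 = 0) (hRn : R n = c - n)
    (hs : ∀ i, i < n → ∃ j, j < n ∧ min j (c - j) = R i ∧
      min (j + 1) (c - (j + 1)) = R (i + 1)) :
    ∀ i, i ≤ n → R i = min i (c - i) := by
  -- upper bound by i
  have hA : ∀ i, i ≤ n → R i ≤ i := by
    intro i
    induction i with
    | zero => omega
    | succ k ih =>
      intro hk
      obtain ⟨j, hj, e1, e2⟩ := hs k (by omega)
      have := ih (by omega)
      omega
  -- upper bound by c - i
  have hB : ∀ k, k ≤ n → R (n - k) ≤ c - (n - k) := by
    intro k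
    induction k with
    | zero => intro _; rw [Nat.sub_zero]; omega
    | succ k ih =>
      intro hk
      obtain ⟨j, hj, e1, e2⟩ := hs (n - (k+1)) (by omega)
      have h1 := ih (by omega)
      have e3 : n - (k+1) + 1 = n - k := by omega
      rw [e3] at e2
      omega
  -- there is a stay step
  have hpar : ∃ t, t < n ∧ R t = R (t+1) := by
    by_contra hcon
    push_neg at hcon
    have key : ∀ i, i ≤ n → (R i + i) % 2 = 0 := by
      intro i
      induction i with
      | zero => omega
      | succ k ih =>
        intro hk
        obtain ⟨j, hj, e1, e2⟩ := hs k (by omega)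
        have hne := hcon k (by omega)
        have := ih (by omega)
        omega
    have := key n le_rfl
    omega
  obtain ⟨t, ht, hstay⟩ := hpar
  obtain ⟨j, hj, e1, e2⟩ := hs t ht
  have hRt : R t = n/2 := by omega
  have hAt := hA t (by omega)
  have hBt1 : R (t+1) ≤ c - (t+1) := by
    have h2 := hB (n - (t+1)) (by omega)
    have e : n - (n - (t+1)) = t+1 := by omega
    rw [e] at h2; exact h2
  have htm : t = n/2 := by omega
  subst htm
  -- lower bound below the peak
  have hlow : ∀ d, d ≤ n/2 → n/2 - d ≤ R (n/2 - d) := by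
    intro d
    induction d with
    | zero => intro _; rw [Nat.sub_zero]; omega
    | succ k ih =>
      intro hk
      have h1 := ih (by omega)
      obtain ⟨j2, hj2, f1, f2⟩ := hs (n/2 - (k+1)) (by omega)
      have e3 : n/2 - (k+1) + 1 = n/2 - k := by omega
      rw [e3] at f2
      omega
  -- lower bound above the peak
  have hhigh : ∀ d, n/2 + 1 + d ≤ n → c - (n/2 + 1 + d) ≤ R (n/2 + 1 + d) := by
    intro d
    induction d with
    | zero =>
      intro _
      have e : n/2 + 1 + 0 = n/2 + 1 := by omega
      rw [e]; omega
    | succ k ih =>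
      intro hk
      have h1 := ih (by omega)
      obtain ⟨j2, hj2, f1, f2⟩ := hs (n/2 + 1 + k) (by omega)
      have e3 : n/2 + 1 + (k+1) = (n/2 + 1 + k) + 1 := by omega
      rw [e3]
      omega
  intro i hi
  rcases le_or_gt i (n/2) with h | h
  · have h1 := hA i hi
    have h2 := hlow (n/2 - i) (by omega)
    have e : n/2 - (n/2 - i) = i := by omega
    rw [e] at h2
    omega
  · have h1 : c - i ≤ R i := by
      have h3 := hhigh (i - (n/2+1)) (by omega)
      have e : n/2 + 1 + (i - (n/2+1)) = i := by omega
      rw [e] at h3; exact h3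
    have h2 : R i ≤ c - i := by
      have h3 := hB (n - i) (by omega)
      have e : n - (n - i) = i := by omega
      rw [e] at h3; exact h3
    omega


lemma unique_path (n : ℕ) (x w : Fin n → Bool) (r : Fin (n + 1) → Fin (n / 2 + 1))
    (h : IsAcceptingPath (hydeNFA n x) n w r) : w = x ∧ r = pPath n := by
  obtain ⟨h0, hacc, hstep⟩ := h
  have h0' : r 0 = pPath n 0 := h0
  have hacc' : r (Fin.last n) = pPath n (Fin.last n) := hacc
  rcases Nat.eq_zero_or_pos n with hn0 | hn1
  · subst hn0
    refine ⟨funext fun i => i.elim0, funext fun i => ?_⟩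
    have h1 := (r i).isLt
    have h2 := (pPath 0 i).isLt
    ext
    omega
  -- the ℕ-level walk
  set c : ℕ := 2 * (n / 2) + 1 with hc
  set R : ℕ → ℕ := fun i => if h : i ≤ n then (r ⟨i, by omega⟩).val else 0 with hR
  have hRval : ∀ (i : ℕ) (hi : i ≤ n), R i = (r ⟨i, by omega⟩).val := by
    intro i hi
    rw [hR]
    simp only [dif_pos hi]
  have hpval : ∀ (f : Fin (n + 1)), (pPath n f).val = min f.val (c - f.val) := fun f => rfl
  have hcs : ∀ (i : ℕ) (hi : i < n), ((⟨i, hi⟩ : Fin n).castSucc : Fin (n+1)) = ⟨i, by omega⟩ :=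
    fun i hi => rfl
  have hsc : ∀ (i : ℕ) (hi : i < n), ((⟨i, hi⟩ : Fin n).succ : Fin (n+1)) = ⟨i + 1, by omega⟩ :=
    fun i hi => rfl
  have hR0 : R 0 = 0 := by
    rw [hRval 0 (by omega)]
    have : (⟨0, by omega⟩ : Fin (n+1)) = 0 := by ext; simp
    rw [this, h0', hpval]
    simp
  have hRn : R n = c - n := by
    rw [hRval n le_rfl]
    have : (⟨n, by omega⟩ : Fin (n+1)) = Fin.last n := rfl
    rw [this, hacc', hpval]
    have : (Fin.last n).val = n := rfl
    rw [this]
    omega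
  have hs : ∀ i, i < n → ∃ j, j < n ∧ min j (c - j) = R i ∧
      min (j + 1) (c - (j + 1)) = R (i + 1) := by
    intro i hi
    obtain ⟨j, hxj, h1, h2⟩ := hstep ⟨i, hi⟩
    refine ⟨j.val, j.isLt, ?_, ?_⟩
    · have e := congrArg Fin.val h1
      rw [hpval] at e
      rw [hRval i (by omega), hcs i hi] at *
      convert e using 2 <;> rfl
    · have e := congrArg Fin.val h2
      rw [hpval] at e
      rw [hRval (i+1) (by omega), hsc i hi] at *
      convert e using 2 <;> rfl
  have hfin := nat_walk n c hc hn1 R hR0 hRn hs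
  have hreq : r = pPath n := by
    funext i
    ext
    have e1 := hRval i.val (by omega)
    have e2 := hfin i.val (by omega)
    have e3 : (⟨i.val, by omega⟩ : Fin (n+1)) = i := rfl
    rw [e3] at e1
    rw [hpval]
    omega
  refine ⟨?_, hreq⟩
  funext i
  obtain ⟨j, hxj, h1, h2⟩ := hstep i
  rw [hreq] at h1 h2
  have e1 := congrArg Fin.val h1
  have e2 := congrArg Fin.val h2
  rw [hpval, hpval] at e1
  rw [hpval, hpval] at e2
  have hji : j = i := by
    simp only [Fin.coe_castSucc, Fin.val_succ] at e1 e2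
    have hji' := j.isLt
    have hii := i.isLt
    ext
    omega
  rw [← hxj, hji]

end Hyde

/-- Hyde's theorem: every binary word of length n is uniquely accepted along a unique
accepting path of length n by some NFA with ⌊n/2⌋ + 1 states, i.e., A_N(x) ≤ ⌊n/2⌋ + 1. -/
theorem hyde_bound (n : ℕ) (x : Fin n → Bool) :
    ∃ M : NFA Bool (Fin (n / 2 + 1)),
      (∃ p, IsAcceptingPath M n x p) ∧
      ∃! wp : (Fin n → Bool) × (Fin (n + 1) → Fin (n / 2 + 1)),
        IsAcceptingPath M n wp.1 wp.2 := by
  refine ⟨Hyde.hydeNFA n x, ⟨Hyde.pPath n, Hyde.exists_path n x⟩,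
    ⟨(x, Hyde.pPath n), Hyde.exists_path n x, ?_⟩⟩
  rintro ⟨w, r⟩ h
  obtain ⟨hw, hr⟩ := Hyde.unique_path n x w r h
  exact Prod.ext hw hr
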